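/- Assume the symmetric unisolvent setup: B = {f_1,…,f_N} is a linearly independent symmetric set of functions, F = span(B), P = {a_1,…,a_N} is a symmetric set of N points, and the interpolation problem is unisolvent. Then the number of S_n-orbits of the set B (under the action σ • f = f ∘ (σ⁻¹ •)) equals the number of S_n-orbits of the set P (under the coordinate-permutation action). -/

import Mathlib

/-- The action of `S_n` on `ℝ^n` by permuting coordinates: `σ • x = x ∘ σ⁻¹`. -/
def psmul {n : ℕ} (σ : Equiv.Perm (Fin n)) (x : Fin n → ℝ) : Fin n → ℝ := x ∘ ⇑σ⁻¹

/-- The action of `S_n` on functions `ℝ^n → ℝ`: `(σ • f)(x) = f(σ⁻¹ • x)`. -/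
def fsmul {n : ℕ} (σ : Equiv.Perm (Fin n)) (f : (Fin n → ℝ) → ℝ) : (Fin n → ℝ) → ℝ :=
  fun x => f (psmul σ⁻¹ x)

/-- The `S_n`-orbit of a point `x ∈ ℝ^n`. -/
def porbit {n : ℕ} (x : Fin n → ℝ) : Set (Fin n → ℝ) := {y | ∃ σ, psmul σ x = y}

/-- The `S_n`-orbit of a function `g : ℝ^n → ℝ`. -/
def forbit {n : ℕ} (g : (Fin n → ℝ) → ℝ) : Set ((Fin n → ℝ) → ℝ) := {h | ∃ σ, fsmul σ g = h}

/-- The Lagrange interpolation problem with interpolation space `F` and nodes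
`a 1, …, a N` is unisolvent. -/
def Unisolvent {n N : ℕ} (F : Submodule ℝ ((Fin n → ℝ) → ℝ))
    (a : Fin N → (Fin n → ℝ)) : Prop :=
  ∀ b : Fin N → ℝ, ∃! f : F, ∀ i, (f : (Fin n → ℝ) → ℝ) (a i) = b i

/- ### Auxiliary lemmas -/

lemma psmul_one {n : ℕ} (x : Fin n → ℝ) : psmul 1 x = x := rfl

lemma psmul_mul {n : ℕ} (σ τ : Equiv.Perm (Fin n)) (x : Fin n → ℝ) :
    psmul (σ * τ) x = psmul σ (psmul τ x) := by
  funext i; simp [psmul, mul_inv_rev]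

lemma fsmul_one {n : ℕ} (g : (Fin n → ℝ) → ℝ) : fsmul 1 g = g := rfl

lemma fsmul_mul {n : ℕ} (σ τ : Equiv.Perm (Fin n)) (g : (Fin n → ℝ) → ℝ) :
    fsmul (σ * τ) g = fsmul σ (fsmul τ g) := by
  funext x; simp [fsmul, mul_inv_rev, psmul_mul]

lemma forbit_eq_of {n : ℕ} {g h : (Fin n → ℝ) → ℝ} (σ : Equiv.Perm (Fin n))
    (hσ : fsmul σ g = h) : forbit g = forbit h := by
  ext k
  constructor
  · rintro ⟨τ, rfl⟩
    exact ⟨τ * σ⁻¹, by rw [← hσ, ← fsmul_mul, mul_assoc, inv_mul_cancel, mul_one]⟩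
  · rintro ⟨τ, rfl⟩
    exact ⟨τ * σ, by rw [fsmul_mul, hσ]⟩

lemma porbit_eq_of {n : ℕ} {x y : Fin n → ℝ} (σ : Equiv.Perm (Fin n))
    (hσ : psmul σ x = y) : porbit x = porbit y := by
  ext k
  constructor
  · rintro ⟨τ, rfl⟩
    exact ⟨τ * σ⁻¹, by rw [← hσ, ← psmul_mul, mul_assoc, inv_mul_cancel, mul_one]⟩
  · rintro ⟨τ, rfl⟩
    exact ⟨τ * σ, by rw [psmul_mul, hσ]⟩

/-- The setoid on `α` induced by a permutation action of `G` via `ρ`. -/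
def permSetoid {G α : Type*} [Group G] (ρ : G →* Equiv.Perm α) : Setoid α where
  r i j := ∃ σ, ρ σ i = j
  iseqv := by
    constructor
    · exact fun i => ⟨1, by simp⟩
    · rintro i j ⟨σ, rfl⟩
      exact ⟨σ⁻¹, by simp⟩
    · rintro i j k ⟨σ, rfl⟩ ⟨τ, rfl⟩
      exact ⟨τ * σ, by simp⟩

lemma permSetoid_r {G α : Type*} [Group G] (ρ : G →* Equiv.Perm α) (i j : α) :
    permSetoid ρ i j ↔ ∃ σ, ρ σ i = j := Iff.rfl

/-- Burnside count for the quotient by a permutation action. -/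
lemma card_quot_permSetoid {G : Type*} [Group G] [Fintype G] {N : ℕ}
    (ρ : G →* Equiv.Perm (Fin N)) :
    Nat.card (Quotient (permSetoid ρ)) * Fintype.card G
      = ∑ σ : G, Nat.card {i : Fin N // ρ σ i = i} := by
  classical
  letI : MulAction G (Fin N) := MulAction.compHom _ ρ
  haveI : ∀ σ : G, Fintype (MulAction.fixedBy (Fin N) σ) := fun σ => Fintype.ofFinite _
  haveI : Fintype (Quotient (MulAction.orbitRel G (Fin N))) := Fintype.ofFinite _
  have hb := MulAction.sum_card_fixedBy_eq_card_orbits_mul_card_group G (Fin N)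
  have horb : MulAction.orbitRel G (Fin N) = permSetoid ρ := by
    apply Setoid.ext; intro i j
    rw [MulAction.orbitRel_apply, MulAction.mem_orbit_iff, permSetoid_r]
    constructor
    · rintro ⟨σ, rfl⟩
      exact ⟨σ⁻¹, by show ρ σ⁻¹ (ρ σ j) = j; simp⟩
    · rintro ⟨σ, rfl⟩
      exact ⟨σ⁻¹, by show ρ σ⁻¹ (ρ σ i) = i; simp⟩
  have h1 : Nat.card (Quotient (permSetoid ρ))
      = Fintype.card (Quotient (MulAction.orbitRel G (Fin N))) := by
    rw [← horb, Nat.card_eq_fintype_card]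
  have h2 : ∀ σ : G, Fintype.card (MulAction.fixedBy (Fin N) σ)
      = Nat.card {i : Fin N // ρ σ i = i} := by
    intro σ
    rw [← Nat.card_eq_fintype_card]
    exact Nat.card_congr (Equiv.subtypeEquivRight fun i => Iff.rfl)
  rw [h1, ← hb]
  exact Finset.sum_congr rfl fun σ _ => h2 σ

/-- If two permutation actions of a finite group have the same number of fixed points for each
group element, they have the same number of orbits. -/
lemma card_quot_eq_of_fixed_eq {G : Type*} [Group G] [Fintype G] {N : ℕ}
    (ρ₁ ρ₂ : G →* Equiv.Perm (Fin N))
    (h : ∀ σ, Nat.card {i : Fin N // ρ₁ σ i = i} = Nat.card {i : Fin N // ρ₂ σ i = i}) :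
    Nat.card (Quotient (permSetoid ρ₁)) = Nat.card (Quotient (permSetoid ρ₂)) := by
  have h1 := card_quot_permSetoid ρ₁
  have h2 := card_quot_permSetoid ρ₂
  have hsum : ∑ σ : G, Nat.card {i : Fin N // ρ₁ σ i = i}
      = ∑ σ : G, Nat.card {i : Fin N // ρ₂ σ i = i} :=
    Finset.sum_congr rfl fun σ _ => h σ
  exact Nat.eq_of_mul_eq_mul_right Fintype.card_pos (by rw [h1, h2, hsum])

/-- in the symmetric unisolvent setup (`B = {f_1,…,f_N}` a linearly independent
symmetric set of functions, `F = span B`, `P = {a_1,…,a_N}` a symmetric set of `N` distinct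
points, the interpolation problem unisolvent), the number of `S_n`-orbits of `B` equals the
number of `S_n`-orbits of `P`. -/
theorem stmt_4 {n N : ℕ} (f : Fin N → ((Fin n → ℝ) → ℝ)) (hf : LinearIndependent ℝ f)
    (hBsym : ∀ σ, ∀ g ∈ Set.range f, fsmul σ g ∈ Set.range f)
    (a : Fin N → (Fin n → ℝ)) (ha : Function.Injective a)
    (hPsym : ∀ σ, ∀ p ∈ Set.range a, psmul σ p ∈ Set.range a)
    (huni : Unisolvent (Submodule.span ℝ (Set.range f)) a) :
    {O : Set ((Fin n → ℝ) → ℝ) | ∃ g ∈ Set.range f, O = forbit g}.ncard =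
    {O : Set (Fin n → ℝ) | ∃ p ∈ Set.range a, O = porbit p}.ncard := by
  classical
  have hfinj : Function.Injective f := hf.injective
  -- the permutations induced on the index set by the action on B and on P
  choose φB hφB using fun (σ : Equiv.Perm (Fin n)) (i : Fin N) => hBsym σ (f i) ⟨i, rfl⟩
  choose φP hφP using fun (σ : Equiv.Perm (Fin n)) (i : Fin N) => hPsym σ (a i) ⟨i, rfl⟩
  -- hφB : ∀ σ i, f (φB σ i) = fsmul σ (f i)
  have hφB1 : ∀ i, φB 1 i = i := fun i => hfinj (by rw [hφB, fsmul_one])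
  have hφBm : ∀ σ τ i, φB (σ * τ) i = φB σ (φB τ i) := fun σ τ i =>
    hfinj (by rw [hφB, hφB, hφB, fsmul_mul])
  have hφP1 : ∀ i, φP 1 i = i := fun i => ha (by rw [hφP, psmul_one])
  have hφPm : ∀ σ τ i, φP (σ * τ) i = φP σ (φP τ i) := fun σ τ i =>
    ha (by rw [hφP, hφP, hφP, psmul_mul])
  let ρB : Equiv.Perm (Fin n) →* Equiv.Perm (Fin N) := MonoidHom.mk'
    (fun σ => ⟨φB σ, φB σ⁻¹,
      fun i => by rw [← hφBm, inv_mul_cancel, hφB1],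
      fun i => by rw [← hφBm, mul_inv_cancel, hφB1]⟩)
    (fun σ τ => Equiv.ext fun i => hφBm σ τ i)
  let ρP : Equiv.Perm (Fin n) →* Equiv.Perm (Fin N) := MonoidHom.mk'
    (fun σ => ⟨φP σ, φP σ⁻¹,
      fun i => by rw [← hφPm, inv_mul_cancel, hφP1],
      fun i => by rw [← hφPm, mul_inv_cancel, hφP1]⟩)
    (fun σ τ => Equiv.ext fun i => hφPm σ τ i)
  have hρB : ∀ σ i, ρB σ i = φB σ i := fun _ _ => rfl
  have hρP : ∀ σ i, ρP σ i = φP σ i := fun _ _ => rfl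
  -- the orbit sets are ranges
  have hBset : {O : Set ((Fin n → ℝ) → ℝ) | ∃ g ∈ Set.range f, O = forbit g}
      = Set.range (fun i => forbit (f i)) := by
    ext O
    constructor
    · rintro ⟨g, ⟨i, rfl⟩, rfl⟩; exact ⟨i, rfl⟩
    · rintro ⟨i, rfl⟩; exact ⟨f i, ⟨i, rfl⟩, rfl⟩
  have hPset : {O : Set (Fin n → ℝ) | ∃ p ∈ Set.range a, O = porbit p}
      = Set.range (fun i => porbit (a i)) := by
    ext O
    constructor
    · rintro ⟨p, ⟨i, rfl⟩, rfl⟩; exact ⟨i, rfl⟩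
    · rintro ⟨i, rfl⟩; exact ⟨a i, ⟨i, rfl⟩, rfl⟩
  -- the kernels of the orbit maps are the permutation setoids
  have hSB : Setoid.ker (fun i => forbit (f i)) = permSetoid ρB := by
    apply Setoid.ext; intro i j
    show forbit (f i) = forbit (f j) ↔ ∃ σ, ρB σ i = j
    constructor
    · intro h
      have hj : f j ∈ forbit (f i) := h ▸ ⟨1, fsmul_one _⟩
      obtain ⟨σ, hσ⟩ := hj
      exact ⟨σ, hfinj (by rw [hρB, hφB, hσ])⟩
    · rintro ⟨σ, rfl⟩
      exact forbit_eq_of σ (hφB σ i).symm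
  have hSP : Setoid.ker (fun i => porbit (a i)) = permSetoid ρP := by
    apply Setoid.ext; intro i j
    show porbit (a i) = porbit (a j) ↔ ∃ σ, ρP σ i = j
    constructor
    · intro h
      have hj : a j ∈ porbit (a i) := h ▸ ⟨1, psmul_one _⟩
      obtain ⟨σ, hσ⟩ := hj
      exact ⟨σ, ha (by rw [hρP, hφP, hσ])⟩
    · rintro ⟨σ, rfl⟩
      exact porbit_eq_of σ (hφP σ i).symm
  -- reduce to counting quotients
  rw [hBset, hPset, ← Nat.card_coe_set_eq, ← Nat.card_coe_set_eq,
    ← Nat.card_congr (Setoid.quotientKerEquivRange fun i => forbit (f i)),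
    ← Nat.card_congr (Setoid.quotientKerEquivRange fun i => porbit (a i)), hSB, hSP]
  -- main step: equal fixed point counts, by a trace argument
  apply card_quot_eq_of_fixed_eq
  intro σ
  -- set up the interpolation space and the evaluation isomorphism
  set V : Submodule ℝ ((Fin n → ℝ) → ℝ) := Submodule.span ℝ (Set.range f) with hV
  let b : Module.Basis (Fin N) ℝ V := Module.Basis.span hf
  let L : ((Fin n → ℝ) → ℝ) →ₗ[ℝ] ((Fin n → ℝ) → ℝ) :=
    { toFun := fsmul σ, map_add' := fun g h => rfl, map_smul' := fun c g => rfl }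
  have hL : ∀ v ∈ V, L v ∈ V := by
    intro v hv
    have hle : V ≤ Submodule.comap L V :=
      Submodule.span_le.mpr fun g hg =>
        Submodule.mem_comap.mpr (Submodule.subset_span (hBsym σ g hg))
    exact hle hv
  let T : V →ₗ[ℝ] V := L.restrict hL
  have hT : ∀ i, T (b i) = b (φB σ i) := by
    intro i
    apply Subtype.ext
    calc (T (b i) : (Fin n → ℝ) → ℝ) = fsmul σ ((b i : (Fin n → ℝ) → ℝ)) := rfl
      _ = fsmul σ (f i) := by rw [Module.Basis.span_apply]
      _ = f (φB σ i) := (hφB σ i).symm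
      _ = ((b (φB σ i) : (Fin n → ℝ) → ℝ)) := congrArg Subtype.val (Module.Basis.span_apply hf _).symm
  have htrT : LinearMap.trace ℝ V T = ∑ i : Fin N, if φB σ i = i then (1 : ℝ) else 0 := by
    rw [LinearMap.trace_eq_matrix_trace ℝ b T, Matrix.trace]
    refine Finset.sum_congr rfl fun i _ => ?_
    rw [Matrix.diag, LinearMap.toMatrix_apply, hT, Module.Basis.repr_self, Finsupp.single_apply]
  -- evaluation map
  let ev : V →ₗ[ℝ] (Fin N → ℝ) :=
    { toFun := fun v i => (v : (Fin n → ℝ) → ℝ) (a i),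
      map_add' := fun u v => rfl, map_smul' := fun c v => rfl }
  have hevbij : Function.Bijective ev := by
    constructor
    · intro u v huv
      obtain ⟨w, hw, hu⟩ := huni fun i => (u : (Fin n → ℝ) → ℝ) (a i)
      have h1 : u = w := hu u fun i => rfl
      have h2 : v = w := hu v fun i => (congrFun huv i).symm
      exact h1.trans h2.symm
    · intro c
      obtain ⟨w, hw, -⟩ := huni c
      exact ⟨w, funext hw⟩
  let evE : V ≃ₗ[ℝ] (Fin N → ℝ) := LinearEquiv.ofBijective ev hevbij
  let Pm : (Fin N → ℝ) →ₗ[ℝ] (Fin N → ℝ) := evE.conj T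
  have hPm : ∀ (v : Fin N → ℝ) (i : Fin N), Pm v i = v (φP σ⁻¹ i) := by
    intro v i
    have hconj : Pm v = evE (T (evE.symm v)) := by
      simp [Pm, LinearEquiv.conj_apply]
    have hgv : ∀ j, ((evE.symm v : V) : (Fin n → ℝ) → ℝ) (a j) = v j := by
      intro j
      have h : evE (evE.symm v) = v := evE.apply_symm_apply v
      calc ((evE.symm v : V) : (Fin n → ℝ) → ℝ) (a j) = (evE (evE.symm v)) j := rfl
        _ = v j := by rw [h]
    calc Pm v i = (evE (T (evE.symm v))) i := by rw [hconj]
      _ = ((T (evE.symm v) : V) : (Fin n → ℝ) → ℝ) (a i) := rfl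
      _ = ((evE.symm v : V) : (Fin n → ℝ) → ℝ) (psmul σ⁻¹ (a i)) := rfl
      _ = ((evE.symm v : V) : (Fin n → ℝ) → ℝ) (a (φP σ⁻¹ i)) := by rw [hφP σ⁻¹ i]
      _ = v (φP σ⁻¹ i) := hgv _
  have htrP : LinearMap.trace ℝ (Fin N → ℝ) Pm
      = ∑ i : Fin N, if φP σ⁻¹ i = i then (1 : ℝ) else 0 := by
    rw [LinearMap.trace_eq_matrix_trace ℝ (Pi.basisFun ℝ (Fin N)) Pm, Matrix.trace]
    refine Finset.sum_congr rfl fun i _ => ?_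
    rw [Matrix.diag, LinearMap.toMatrix_apply, Pi.basisFun_repr, hPm, Pi.basisFun_apply]
    simp [Pi.single_apply]
  have htr : LinearMap.trace ℝ (Fin N → ℝ) Pm = LinearMap.trace ℝ V T :=
    LinearMap.trace_conj' T evE
  have hkey : ∑ i : Fin N, (if φB σ i = i then (1 : ℝ) else 0)
      = ∑ i : Fin N, if φP σ⁻¹ i = i then (1 : ℝ) else 0 := by
    rw [← htrT, ← htrP, htr]
  -- fixed points of `φP σ⁻¹` coincide with those of `φP σ`
  have hfixiff : ∀ i, (φP σ⁻¹ i = i ↔ φP σ i = i) := by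
    intro i
    constructor
    · intro h
      have h2 := congrArg (φP σ) h
      rw [← hφPm, mul_inv_cancel, hφP1] at h2
      exact h2.symm
    · intro h
      have h2 := congrArg (φP σ⁻¹) h
      rw [← hφPm, inv_mul_cancel, hφP1] at h2
      exact h2.symm
  have hkey2 : ∑ i : Fin N, (if φB σ i = i then (1 : ℝ) else 0)
      = ∑ i : Fin N, if φP σ i = i then (1 : ℝ) else 0 := by
    rw [hkey]
    exact Finset.sum_congr rfl fun i _ => by simp [hfixiff i]
  -- convert sums of indicators to cardinalities
  rw [Finset.sum_boole, Finset.sum_boole] at hkey2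
  have hcard : (Finset.univ.filter fun i => φB σ i = i).card
      = (Finset.univ.filter fun i => φP σ i = i).card := by
    exact_mod_cast hkey2
  have hc1 : Nat.card {i : Fin N // ρB σ i = i}
      = (Finset.univ.filter fun i => φB σ i = i).card := by
    rw [Nat.card_eq_fintype_card]
    convert Fintype.card_subtype (fun i : Fin N => φB σ i = i) using 2
    rfl
  have hc2 : Nat.card {i : Fin N // ρP σ i = i}
      = (Finset.univ.filter fun i => φP σ i = i).card := by
    rw [Nat.card_eq_fintype_card]
    convert Fintype.card_subtype (fun i : Fin N => φP σ i = i) using 2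
    rfl
  rw [hc1, hc2, hcard]
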